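/- Let s ≥ 0 and ω, η > 0. Let u, v, ζ_u, ζ_v, ξ ∈ H with u ≠ v, ‖ζ_u‖ ≤ ‖u‖ and ‖ζ_v‖ ≤ ‖v‖, and set u* = ζ_u + ξ and v* = ζ_v + ξ. Then d*(u*, v*) / d*(u,v) ≤ (1 + 2η‖ξ‖)^s · ‖ζ_u − ζ_v‖ / ‖u − v‖. -/

import Mathlib

open MeasureTheory ProbabilityTheory
open scoped ENNReal NNReal RealInnerProductSpace

noncomputable section

namespace Paper

variable {H : Type*}

section Defs
variable [NormedAddCommGroup H] [MeasurableSpace H]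

/-- `π` is a coupling of `μ` and `ν`. -/
def IsCoupling (π : Measure (H × H)) (μ ν : Measure H) : Prop :=
  π.map Prod.fst = μ ∧ π.map Prod.snd = ν

/-- The Wasserstein-like extension of a semimetric `d` to probability measures,
`d(μ,ν) = inf over couplings π of ∫ d dπ`. -/
def wassDist (d : H → H → ℝ) (μ ν : Measure H) : ℝ :=
  sInf { r : ℝ | ∃ π : Measure (H × H), IsProbabilityMeasure π ∧ IsCoupling π μ ν ∧
    r = ∫ p, d p.1 p.2 ∂π }

/-- `d*(u,v) = (1 + η‖u‖ + η‖v‖)^s ‖u − v‖ / ω`. -/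
def dStar (η ω s : ℝ) (u v : H) : ℝ :=
  (1 + η * ‖u‖ + η * ‖v‖) ^ s * ‖u - v‖ / ω

/-- `d_s(u,v) = min(1, d*(u,v))`. -/
def dSemi (η ω s : ℝ) (u v : H) : ℝ := min 1 (dStar η ω s u v)

/-- The weighted semimetric `d̃(u,v) = [d(u,v)(2 + θV(u) + θV(v))]^{1/2}`. -/
def dTilde (d : H → H → ℝ) (V : H → ℝ) (θ : ℝ) (u v : H) : ℝ :=
  Real.sqrt (d u v * (2 + θ * V u + θ * V v))

/-- Lipschitz seminorm of `f` with respect to a semimetric `dt`. -/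
def lipSemi (dt : H → H → ℝ) (f : H → ℝ) : ℝ :=
  sSup { r : ℝ | ∃ u v : H, u ≠ v ∧ r = |f u - f v| / dt u v }

/-- Metropolis–Hastings acceptance probability `α(u,v) = min(1, exp(Ψ(u) − Ψ(v)))`. -/
def accept (Ψ : H → ℝ) (u v : H) : ℝ := min 1 (Real.exp (Ψ u - Ψ v))

/-- RCAR proposal kernel: the law of `ζ + ξ` with `ζ ~ κ(u,·)`, `ξ ~ μβ` independent. -/
def rcarProposal (κ : Kernel H H) (μβ : Measure H) (u : H) : Measure H :=
  ((κ u).prod μβ).map (fun p : H × H => p.1 + p.2)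

/-- `P` is the Metropolis–Hastings kernel with acceptance probability `a` and proposal `Q`:
`P(u,A) = ∫_A a(u,v) Q(u,dv) + δ_u(A) ∫ (1 − a(u,w)) Q(u,dw)`. -/
def IsMHKernel (P : Kernel H H) (a : H → H → ℝ) (Q : H → Measure H) : Prop :=
  ∀ (u : H) (A : Set H), MeasurableSet A →
    (P u A).toReal = (∫ v in A, a u v ∂(Q u)) +
      (A.indicator (fun _ => (1 : ℝ)) u) * ∫ w, (1 - a u w) ∂(Q u)

/-- `P` is the RCAR-MH kernel built from potential `Ψ`, kernel `κ` and innovation `μβ`. -/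
def IsRCAR (P : Kernel H H) (Ψ : H → ℝ) (κ : Kernel H H) (μβ : Measure H) : Prop :=
  IsMHKernel P (accept Ψ) (rcarProposal κ μβ)

/-- `kIter P n u = Pⁿ δ_u`, the law after `n` steps of the chain started at `u`. -/
def kIter (P : Kernel H H) : ℕ → H → Measure H
  | 0, u => Measure.dirac u
  | n + 1, u => (kIter P n u).bind (fun x => P x)

/-- `ν` is an invariant measure for `P`: `∫ P(u,A) ν(du) = ν(A)` for all Borel `A`. -/
def IsInvariant (P : Kernel H H) (ν : Measure H) : Prop :=
  ∀ A : Set H, MeasurableSet A → ∫⁻ u, P u A ∂ν = ν A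

/-- `EChain P n u g` is the expectation of `g(U_0, …, U_n)` for the Markov chain with
transition kernel `P` started at `U_0 = u`. -/
def EChain (P : Kernel H H) : (n : ℕ) → H → ((Fin (n + 1) → H) → ℝ) → ℝ
  | 0, u, g => g (fun _ => u)
  | n + 1, u, g => ∫ v, EChain P n v (fun xs => g (Fin.cons u xs)) ∂(P u)

end Defs

section Assumptions
variable [NormedAddCommGroup H] [NormedSpace ℝ H] [MeasurableSpace H]

/-- Assumption 1(a): locally bounded from above. -/
def Assumption1a (Ψ : H → ℝ) : Prop :=
  ∀ R : ℝ, 0 < R → ∃ M₁ : ℝ, 0 ≤ M₁ ∧ ∀ u : H, ‖u‖ ≤ R → Ψ u ≤ M₁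

/-- Assumption 1(b): locally bounded from below, with exponent `q ≥ 0`. -/
def Assumption1b (Ψ : H → ℝ) (q : ℝ) : Prop :=
  ∃ M₂ M₃ : ℝ, 0 ≤ M₂ ∧ 0 ≤ M₃ ∧ ∀ u : H, M₃ - M₂ * Real.log (‖u‖ ^ q) ≤ Ψ u

/-- Assumption 1(c): increasing in the tail. -/
def Assumption1c (Ψ : H → ℝ) : Prop :=
  ∀ βt bt : ℝ, βt ∈ Set.Ioo (0 : ℝ) 1 → bt ∈ Set.Ioo (0 : ℝ) 1 →
    ∃ R₀ M₄ : ℝ, 0 < R₀ ∧ 0 < M₄ ∧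
      ∀ u v : H, R₀ < ‖u‖ → ‖v - βt • u‖ ≤ bt * (1 - βt) * ‖u‖ →
        M₄ ≤ Real.exp (Ψ u - Ψ v)

/-- Assumption 1(d): locally Lipschitz with exponent `q ≥ 0`. -/
def Assumption1d (Ψ : H → ℝ) (q : ℝ) : Prop :=
  ∃ L : ℝ, 0 < L ∧ ∀ u v : H,
    |Ψ u - Ψ v| ≤ L * max 1 (max (‖u‖ ^ q) (‖v‖ ^ q)) * ‖u - v‖

/-- Assumption 2(a): almost sure contraction. -/
def Assumption2a (κ : Kernel H H) : Prop :=
  ∀ u : H, ∀ᵐ ζ ∂(κ u), ‖ζ‖ < ‖u‖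

/-- Assumption 2(b): local concentration. -/
def Assumption2b (κ : Kernel H H) : Prop :=
  ∃ β₀ b₀ ε₀ : ℝ, 0 < b₀ ∧ b₀ < β₀ ∧ β₀ < 1 ∧ 0 < ε₀ ∧
    ∀ u : H, ENNReal.ofReal ε₀ ≤ κ u {ζ : H | ‖ζ - β₀ • u‖ ≤ b₀ * (1 - β₀) * ‖u‖}

/-- Assumption 2(c): contracting couplings. -/
def Assumption2c (κ : Kernel H H) : Prop :=
  ∃ βc : ℝ, 0 < βc ∧ βc < 1 ∧ ∀ u v : H,
    ∃ π : Measure (H × H), IsProbabilityMeasure π ∧ IsCoupling π (κ u) (κ v) ∧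
      (∀ᵐ p ∂π, ‖p.1 - p.2‖ < ‖u - v‖) ∧
      (∫ p, ‖p.1 - p.2‖ ∂π) ≤ βc * ‖u - v‖

end Assumptions

end Paper

namespace Paper

/-- Lemma 20(b) of the paper. If `‖ζ_u‖ ≤ ‖u‖`, `‖ζ_v‖ ≤ ‖v‖` and
`u* = ζ_u + ξ`, `v* = ζ_v + ξ`, then
`d*(u*, v*)/d*(u,v) ≤ (1 + 2η‖ξ‖)^s ‖ζ_u − ζ_v‖ / ‖u − v‖`. -/
theorem statement16 {H : Type*} [NormedAddCommGroup H] [NormedSpace ℝ H] [CompleteSpace H]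
    [SecondCountableTopology H] [MeasurableSpace H] [BorelSpace H]
    (s ω η : ℝ) (hs : 0 ≤ s) (hω : 0 < ω) (hη : 0 < η)
    (u v ζu ζv ξ : H) (huv : u ≠ v) (hζu : ‖ζu‖ ≤ ‖u‖) (hζv : ‖ζv‖ ≤ ‖v‖) :
    dStar η ω s (ζu + ξ) (ζv + ξ) / dStar η ω s u v
      ≤ (1 + 2 * η * ‖ξ‖) ^ s * ‖ζu - ζv‖ / ‖u - v‖ := by
  have hd : ζu + ξ - (ζv + ξ) = ζu - ζv := by abel
  set A := 1 + η * ‖ζu + ξ‖ + η * ‖ζv + ξ‖ with hA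
  set B := 1 + η * ‖u‖ + η * ‖v‖ with hB
  set C := 1 + 2 * η * ‖ξ‖ with hC
  have hnA : (0:ℝ) ≤ A := by positivity
  have hB1 : (1:ℝ) ≤ B := by
    have := mul_nonneg hη.le (norm_nonneg u)
    have := mul_nonneg hη.le (norm_nonneg v)
    rw [hB]; linarith
  have hBpos : (0:ℝ) < B := by positivity
  have hCpos : (0:ℝ) < C := by positivity
  have huv' : (0:ℝ) < ‖u - v‖ := by
    rw [norm_pos_iff, sub_ne_zero]; exact huv
  have hAB : A ≤ C * B := by
    have h1 : A ≤ 1 + η * ‖u‖ + η * ‖v‖ + 2 * η * ‖ξ‖ := by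
      have t1 : ‖ζu + ξ‖ ≤ ‖u‖ + ‖ξ‖ :=
        (norm_add_le _ _).trans (by linarith)
      have t2 : ‖ζv + ξ‖ ≤ ‖v‖ + ‖ξ‖ :=
        (norm_add_le _ _).trans (by linarith)
      rw [hA]; nlinarith [hη.le]
    have h2 : 1 + η * ‖u‖ + η * ‖v‖ + 2 * η * ‖ξ‖ ≤ C * B := by
      rw [hC, hB]
      nlinarith [norm_nonneg ξ, norm_nonneg u, norm_nonneg v, hη.le, mul_nonneg (mul_nonneg (by norm_num : (0:ℝ) ≤ 2) hη.le) (norm_nonneg ξ)]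
    linarith
  have hpow : A ^ s ≤ C ^ s * B ^ s := by
    rw [← Real.mul_rpow hCpos.le hBpos.le]
    exact Real.rpow_le_rpow hnA hAB hs
  have hBs : (0:ℝ) < B ^ s := Real.rpow_pos_of_pos hBpos s
  have h1 : dStar η ω s (ζu + ξ) (ζv + ξ) / dStar η ω s u v
      = (A ^ s / B ^ s) * (‖ζu - ζv‖ / ‖u - v‖) := by
    unfold dStar
    rw [hd]
    field_simp
    rw [hA, hB]; ring
  rw [h1]
  have h2 : A ^ s / B ^ s ≤ C ^ s := by
    rw [div_le_iff₀ hBs]; exact hpow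
  calc (A ^ s / B ^ s) * (‖ζu - ζv‖ / ‖u - v‖)
      ≤ C ^ s * (‖ζu - ζv‖ / ‖u - v‖) :=
        mul_le_mul_of_nonneg_right h2 (by positivity)
    _ = C ^ s * ‖ζu - ζv‖ / ‖u - v‖ := by rw [mul_div_assoc]


end Paper
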